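/- Let Z ~ N(m, σ²) with σ > 0 and z_min ∈ ℝ, and define the improvement I = max(z_min − Z, 0). Then E[I] = (z_min − m)·Φ((z_min − m)/σ) + σ·φ((z_min − m)/σ), where φ and Φ are the standard normal PDF and CDF. -/

import Mathlib

open MeasureTheory ProbabilityTheory Real
open scoped ENNReal NNReal

noncomputable def stdNormalPdf (v : ℝ) : ℝ :=
  (Real.sqrt (2 * Real.pi))⁻¹ * Real.exp (-v ^ 2 / 2)

noncomputable def stdNormalCdf (a : ℝ) : ℝ :=
  ∫ v in Set.Iic a, stdNormalPdf v

lemma stdNormalPdf_eq (x : ℝ) : stdNormalPdf x = gaussianPDFReal 0 1 x := by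
  simp [stdNormalPdf, gaussianPDFReal]

lemma stdNormalPdf_pos (x : ℝ) : 0 < stdNormalPdf x := by
  have h : 0 < Real.sqrt (2 * Real.pi) := Real.sqrt_pos.mpr (by positivity)
  exact mul_pos (inv_pos.mpr h) (Real.exp_pos _)

lemma integrable_stdNormalPdf : Integrable stdNormalPdf := by
  have := integrable_gaussianPDFReal 0 1
  exact this.congr (Filter.Eventually.of_forall fun x => (stdNormalPdf_eq x).symm)

lemma integrable_mul_stdNormalPdf : Integrable (fun x => x * stdNormalPdf x) := by
  have h : Integrable (fun x : ℝ => x * Real.exp (-(1/2 : ℝ) * x ^ 2)) :=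
    integrable_mul_exp_neg_mul_sq (by norm_num)
  have := h.const_mul ((Real.sqrt (2 * Real.pi))⁻¹)
  refine this.congr (Filter.Eventually.of_forall fun x => ?_)
  simp [stdNormalPdf]
  ring_nf

lemma hasDerivAt_neg_stdNormalPdf (x : ℝ) :
    HasDerivAt (fun u => -stdNormalPdf u) (x * stdNormalPdf x) x := by
  have h1 : HasDerivAt (fun u : ℝ => -u ^ 2 / 2) (-x) x := by
    have : HasDerivAt (fun u : ℝ => u ^ 2) (2 * x) x := by
      simpa using (hasDerivAt_pow 2 x)
    have h := (this.neg).div_const 2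
    refine h.congr_deriv ?_
    ring
  have h2 : HasDerivAt (fun u : ℝ => Real.exp (-u ^ 2 / 2))
      (Real.exp (-x ^ 2 / 2) * (-x)) x := h1.exp
  have h3 := (h2.const_mul ((Real.sqrt (2 * Real.pi))⁻¹)).neg
  refine h3.congr_deriv ?_
  simp [stdNormalPdf]
  ring

lemma tendsto_neg_stdNormalPdf_atBot :
    Filter.Tendsto (fun u => -stdNormalPdf u) Filter.atBot (nhds 0) := by
  have hsq : Filter.Tendsto (fun u : ℝ => u ^ 2) Filter.atBot Filter.atTop := by
    have ha : Filter.Tendsto (fun x : ℝ => x ^ 2) Filter.atTop Filter.atTop :=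
      Filter.tendsto_pow_atTop (by norm_num)
    have hb : Filter.Tendsto (fun x : ℝ => -x) Filter.atBot Filter.atTop :=
      Filter.tendsto_neg_atBot_atTop
    have h := ha.comp hb
    have he : ((fun x : ℝ => x ^ 2) ∘ fun x : ℝ => -x) = fun u : ℝ => u ^ 2 := by
      funext u; simp [Function.comp, neg_sq]
    rwa [he] at h
  have h1 : Filter.Tendsto (fun u : ℝ => -u ^ 2 / 2) Filter.atBot Filter.atBot := by
    apply Filter.Tendsto.atBot_div_const (by norm_num)
    exact Filter.tendsto_neg_atBot_iff.mpr hsq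
  have h2 : Filter.Tendsto (fun u : ℝ => Real.exp (-u ^ 2 / 2)) Filter.atBot (nhds 0) :=
    Real.tendsto_exp_atBot.comp h1
  have h3 := (h2.const_mul ((Real.sqrt (2 * Real.pi))⁻¹)).neg
  simpa [stdNormalPdf] using h3

lemma integral_Iic_mul_stdNormalPdf (a : ℝ) :
    ∫ x in Set.Iic a, x * stdNormalPdf x = -stdNormalPdf a := by
  have h := integral_Iic_of_hasDerivAt_of_tendsto' (f := fun u => -stdNormalPdf u)
    (f' := fun x => x * stdNormalPdf x) (a := a) (m := 0)
    (fun x _ => hasDerivAt_neg_stdNormalPdf x)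
    integrable_mul_stdNormalPdf.integrableOn
    tendsto_neg_stdNormalPdf_atBot
  simpa using h

lemma key_integral (a : ℝ) :
    ∫ u, max (a - u) 0 ∂(gaussianReal 0 1) = a * stdNormalCdf a + stdNormalPdf a := by
  rw [gaussianReal_of_var_ne_zero 0 one_ne_zero]
  have hpdf : gaussianPDF 0 1 = fun x => (((gaussianPDFReal 0 1 x).toNNReal : ℝ≥0) : ℝ≥0∞) :=
    rfl
  rw [hpdf, integral_withDensity_eq_integral_smul
    ((measurable_gaussianPDFReal 0 1).real_toNNReal) (fun u => max (a - u) 0)]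
  have h1 : (fun x => (gaussianPDFReal 0 1 x).toNNReal • max (a - x) 0)
      = Set.indicator (Set.Iic a) (fun x => a * stdNormalPdf x - x * stdNormalPdf x) := by
    funext x
    have hcoe : (gaussianPDFReal 0 1 x).toNNReal • max (a - x) 0
        = stdNormalPdf x * max (a - x) 0 := by
      rw [NNReal.smul_def, Real.coe_toNNReal _ (gaussianPDFReal_nonneg 0 1 x), smul_eq_mul,
        stdNormalPdf_eq]
    rw [hcoe]
    by_cases hx : x ≤ a
    · rw [Set.indicator_of_mem (Set.mem_Iic.mpr hx)]
      rw [max_eq_left (by linarith)]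
      ring
    · rw [Set.indicator_of_notMem (by simpa using hx)]
      rw [max_eq_right (by push_neg at hx; linarith)]
      ring
  rw [h1, integral_indicator measurableSet_Iic]
  rw [integral_sub ((integrable_stdNormalPdf.const_mul a).integrableOn)
    (integrable_mul_stdNormalPdf.integrableOn)]
  rw [integral_const_mul, integral_Iic_mul_stdNormalPdf]
  rw [stdNormalCdf]
  ring

theorem stmt_2 (m σ zmin : ℝ) (hσ : 0 < σ) :
    ∫ z, max (zmin - z) 0 ∂(gaussianReal m (Real.toNNReal (σ ^ 2)))
      = (zmin - m) * stdNormalCdf ((zmin - m) / σ)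
        + σ * stdNormalPdf ((zmin - m) / σ) := by
  set a : ℝ := (zmin - m) / σ with ha
  have haσ : σ * a = zmin - m := by
    rw [ha]; field_simp
  have hmap : gaussianReal m (Real.toNNReal (σ ^ 2))
      = (gaussianReal 0 1).map (fun u => σ * u + m) := by
    have h3 : (fun u : ℝ => σ * u + m) = (fun x : ℝ => x + m) ∘ (fun u : ℝ => σ * u) := rfl
    rw [h3, ← Measure.map_map (by fun_prop) (by fun_prop), gaussianReal_map_const_mul σ,
      gaussianReal_map_add_const m]
    congr 1
    · ring
    · rw [mul_one, Real.toNNReal_of_nonneg (sq_nonneg σ)]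
  rw [hmap, integral_map (by fun_prop)
    (Continuous.aestronglyMeasurable (by continuity : Continuous fun z : ℝ => max (zmin - z) 0))]
  have h4 : (fun u : ℝ => max (zmin - (σ * u + m)) 0) = fun u : ℝ => σ * max (a - u) 0 := by
    funext u
    have : zmin - (σ * u + m) = σ * (a - u) := by rw [mul_sub, haσ]; ring
    rw [this, mul_max_of_nonneg _ _ hσ.le, mul_zero]
  simp only [h4]
  rw [integral_const_mul, key_integral]
  rw [mul_add, ← mul_assoc, haσ]
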